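/- (Proposition 1, double-root case.) Assume Δ = 0, γ ≠ 4, α ≠ 0, β ≠ 0 and αl = βm. Since Δ = 0, each sᵢ fixes b, so s₁, s₂, s₃ induce linear maps s̄₁, s̄₂, s̄₃ on the quotient M̄ := M/(K·b). Let e : K² → M̄ be the linear map determined by e(c₂) = α⁻¹·[a₂] and e(c₃) = β⁻¹·[a₃] (well defined since (c₂, c₃) is a basis of K², as γ ≠ 4). Then e is a linear isomorphism and e ∘ σᵢ = s̄ᵢ ∘ e for i = 1, 2, 3. -/

import Mathlib

noncomputable section

variable {K : Type*} [Field K] [CharZero K]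

/-- The linear functional `x ↦ c 0 * x 0 + c 1 * x 1 + c 2 * x 2` on `K³`. -/
def lf (c : Fin 3 → K) : (Fin 3 → K) →ₗ[K] K :=
  c 0 • LinearMap.proj 0 + c 1 • LinearMap.proj 1 + c 2 • LinearMap.proj 2

/-- `s₁ : x ↦ x − (2x₁ − α x₂ − β x₃)·a₁` where `a₁ = Pi.single 0 1`. -/
def s1 (α β : K) : Module.End K (Fin 3 → K) :=
  LinearMap.id - (lf ![2, -α, -β]).smulRight (Pi.single 0 1)

/-- `s₂ : x ↦ x − (−x₁ + 2x₂ − l·x₃)·a₂`. -/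
def s2 (l : K) : Module.End K (Fin 3 → K) :=
  LinearMap.id - (lf ![-1, 2, -l]).smulRight (Pi.single 1 1)

/-- `s₃ : x ↦ x − (−x₁ − m·x₂ + 2x₃)·a₃`. -/
def s3 (m : K) : Module.End K (Fin 3 → K) :=
  LinearMap.id - (lf ![-1, -m, 2]).smulRight (Pi.single 2 1)

/-- `b = b₁ = (4−γ)a₁ + (l+2)a₂ + (m+2)a₃`, with `γ = l·m`. -/
def bvec (l m : K) : Fin 3 → K := ![4 - l * m, l + 2, m + 2]

/-- `b₂ = (2α+βm)a₁ + (4−β)a₂ + (α+2m)a₃`. -/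
def b2vec (α β l m : K) : Fin 3 → K := ![2*α + β*m, 4 - β, α + 2*m]

/-- `b₃ = (2β+αl)a₁ + (β+2l)a₂ + (4−α)a₃`. -/
def b3vec (α β l m : K) : Fin 3 → K := ![2*β + α*l, β + 2*l, 4 - α]

/-- `τ(λ,μ) : a₁ ↦ a₁ + ω·b, a₂ ↦ a₂ + λ·b, a₃ ↦ a₃ + μ·b`,
where `ω = −(λ(l+2) + μ(m+2))/(4−γ)`. -/
def tau (l m lam mu : K) : Module.End K (Fin 3 → K) :=
  LinearMap.id +
    (lf ![-(lam*(l+2) + mu*(m+2))/(4 - l*m), lam, mu]).smulRight (bvec l m)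

/-- `τ` applied to a vector `(λ,μ) ∈ K²`. -/
def tauv (l m : K) (v : K × K) : Module.End K (Fin 3 → K) := tau l m v.1 v.2

def c1 (α β : K) : K × K := (α, β)
def c2 (l : K) : K × K := (-2, l)
def c3 (m : K) : K × K := (m, -2)

/-- `z₁ : a₁ ↦ −a₁ + (2/(4−γ))·b, a₂ ↦ −a₂, a₃ ↦ −a₃`. -/
def z1 (l m : K) : Module.End K (Fin 3 → K) :=
  -LinearMap.id + (lf ![2/(4 - l*m), 0, 0]).smulRight (bvec l m)

/-- `z₂ : a₂ ↦ −a₂ + (2/(l+2))·b, a₁ ↦ −a₁, a₃ ↦ −a₃`. -/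
def z2 (l m : K) : Module.End K (Fin 3 → K) :=
  -LinearMap.id + (lf ![0, 2/(l+2), 0]).smulRight (bvec l m)

/-- `z₃ : a₃ ↦ −a₃ + (2/(m+2))·b, a₁ ↦ −a₁, a₂ ↦ −a₂`. -/
def z3 (l m : K) : Module.End K (Fin 3 → K) :=
  -LinearMap.id + (lf ![0, 0, 2/(m+2)]).smulRight (bvec l m)

/-- The linear functional `(λ,μ) ↦ c.1·λ + c.2·μ` on `K²`. -/
def lf2 (c : K × K) : (K × K) →ₗ[K] K := c.1 • LinearMap.fst K K K + c.2 • LinearMap.snd K K K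

/-- `σ₁(λ,μ) = (λ,μ) − ((λ(l+2)+μ(m+2))/(4−γ))·(α,β)`. -/
def sigma1 (α β l m : K) : Module.End K (K × K) :=
  LinearMap.id - (lf2 ((l+2)/(4 - l*m), (m+2)/(4 - l*m))).smulRight (α, β)

/-- `σ₂(λ,μ) = (λ,μ) + λ·(−2,l)`. -/
def sigma2 (l : K) : Module.End K (K × K) :=
  LinearMap.id + (LinearMap.fst K K K).smulRight ((-2 : K), l)

/-- `σ₃(λ,μ) = (λ,μ) + μ·(m,−2)`. -/
def sigma3 (m : K) : Module.End K (K × K) :=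
  LinearMap.id + (LinearMap.snd K K K).smulRight (m, (-2 : K))

/-- The sequence `u_x` : `u_x(0)=0, u_x(1)=u_x(2)=1, u_x(3)=x−1,
u_x(n+4) = (x−2)·u_x(n+2) − u_x(n)`. -/
def useq (x : K) : ℕ → K
  | 0 => 0
  | 1 => 1
  | 2 => 1
  | 3 => x - 1
  | (n+4) => (x - 2) * useq x (n+2) - useq x n


set_option linter.unusedSectionVars false
set_option maxHeartbeats 1000000

lemma lf_apply (c x : Fin 3 → K) : lf c x = c 0 * x 0 + c 1 * x 1 + c 2 * x 2 := by
  simp [lf]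

lemma s1_apply (α β : K) (x : Fin 3 → K) :
    s1 α β x = ![x 0 - (2*x 0 - α*x 1 - β*x 2), x 1, x 2] := by
  funext i; fin_cases i <;> simp [s1, lf_apply, Pi.single_apply] <;> ring

lemma s2_apply (l : K) (x : Fin 3 → K) :
    s2 l x = ![x 0, x 1 - (-x 0 + 2*x 1 - l*x 2), x 2] := by
  funext i; fin_cases i <;> simp [s2, lf_apply, Pi.single_apply] <;> ring

lemma s3_apply (m : K) (x : Fin 3 → K) :
    s3 m x = ![x 0, x 1, x 2 - (-x 0 - m*x 1 + 2*x 2)] := by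
  funext i; fin_cases i <;> simp [s3, lf_apply, Pi.single_apply] <;> ring

lemma sigma1_apply (α β l m : K) (v : K × K) :
    sigma1 α β l m v = (v.1 - ((l+2)/(4-l*m)*v.1 + (m+2)/(4-l*m)*v.2)*α,
                        v.2 - ((l+2)/(4-l*m)*v.1 + (m+2)/(4-l*m)*v.2)*β) := by
  simp [sigma1, lf2, Prod.ext_iff, smul_eq_mul]

lemma sigma2_apply (l : K) (v : K × K) :
    sigma2 l v = (v.1 + v.1*(-2), v.2 + v.1*l) := by
  simp [sigma2, Prod.ext_iff, smul_eq_mul, mul_comm]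

lemma sigma3_apply (m : K) (v : K × K) :
    sigma3 m v = (v.1 + v.2*m, v.2 + v.2*(-2)) := by
  simp [sigma3, Prod.ext_iff, smul_eq_mul, mul_comm]
/-- Proposition 1, double-root case: assume `Δ = 0`, `γ ≠ 4`,
`α ≠ 0`, `β ≠ 0`, `αl = βm`.  Each `sᵢ` fixes `b`, hence induces `s̄ᵢ` on
`M̄ = M/(K·b)`.  If `e : K² → M̄` is linear with `e(c₂) = α⁻¹[a₂]` and
`e(c₃) = β⁻¹[a₃]`, then `e` is a linear isomorphism and `e ∘ σᵢ = s̄ᵢ ∘ e`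
(expressed via representatives). -/
theorem stmt8 (α β l m : K)
    (hΔ : 8 - 2*α - 2*β - 2*(l*m) - (α*l + β*m) = 0) (hγ : l*m ≠ 4)
    (hα : α ≠ 0) (hβ : β ≠ 0) (hdr : α*l = β*m)
    (e : (K × K) →ₗ[K] ((Fin 3 → K) ⧸ Submodule.span K {bvec l m}))
    (he2 : e (c2 l) = α⁻¹ • Submodule.Quotient.mk (Pi.single 1 1))
    (he3 : e (c3 m) = β⁻¹ • Submodule.Quotient.mk (Pi.single 2 1)) :
    Function.Bijective e ∧
    ∀ (v : K × K) (x : Fin 3 → K), Submodule.Quotient.mk x = e v →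
      (Submodule.Quotient.mk (s1 α β x) = e (sigma1 α β l m v) ∧
       Submodule.Quotient.mk (s2 l x) = e (sigma2 l v) ∧
       Submodule.Quotient.mk (s3 m x) = e (sigma3 m v)) := by


  have hD : (4:K) - l*m ≠ 0 := sub_ne_zero.mpr (Ne.symm hγ)
  have hD' : (4:K) - m*l ≠ 0 := by rwa [mul_comm]
  have hmk : ∀ x y : Fin 3 → K, (∃ c : K, x - y = c • bvec l m) →
      (Submodule.Quotient.mk x : (Fin 3 → K) ⧸ Submodule.span K {bvec l m}) =
        Submodule.Quotient.mk y := by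
    rintro x y ⟨c, hc⟩
    rw [Submodule.Quotient.eq, hc]
    exact Submodule.smul_mem _ _ (Submodule.mem_span_singleton_self _)
  have hA : ∀ u : K × K, u = ((-2*u.1 - m*u.2)/(4 - l*m)) • c2 l
      + ((-l*u.1 - 2*u.2)/(4 - l*m)) • c3 m := by
    intro u
    have h1 : u.1 = ((-2*u.1 - m*u.2)/(4 - l*m)) * (-2)
        + ((-l*u.1 - 2*u.2)/(4 - l*m)) * m := by
      field_simp [hD, hD']
      ring
    have h2 : u.2 = ((-2*u.1 - m*u.2)/(4 - l*m)) * l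
        + ((-l*u.1 - 2*u.2)/(4 - l*m)) * (-2) := by
      field_simp [hD, hD']
      ring
    ext
    · simpa [c2, c3, smul_eq_mul] using h1
    · simpa [c2, c3, smul_eq_mul] using h2
  have hE : ∀ u : K × K, e u = Submodule.Quotient.mk
      ![0, ((-2*u.1 - m*u.2)/(4 - l*m))*α⁻¹, ((-l*u.1 - 2*u.2)/(4 - l*m))*β⁻¹] := by
    intro u
    conv_lhs => rw [hA u]
    rw [map_add, map_smul, map_smul, he2, he3]
    have hvec : (![0, ((-2*u.1 - m*u.2)/(4 - l*m))*α⁻¹,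
          ((-l*u.1 - 2*u.2)/(4 - l*m))*β⁻¹] : Fin 3 → K)
        = ((-2*u.1 - m*u.2)/(4 - l*m)) • α⁻¹ • (Pi.single 1 1 : Fin 3 → K)
          + ((-l*u.1 - 2*u.2)/(4 - l*m)) • β⁻¹ • (Pi.single 2 1 : Fin 3 → K) := by
      funext i; fin_cases i <;> simp [Pi.single_apply]
    rw [hvec]
    simp only [Submodule.Quotient.mk_add, Submodule.Quotient.mk_smul]
  constructor
  · constructor
    · -- injectivity
      have hker : ∀ u : K × K, e u = 0 → u = 0 := by
        intro u hu
        rw [hE u, Submodule.Quotient.mk_eq_zero, Submodule.mem_span_singleton] at hu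
        obtain ⟨c, hc⟩ := hu
        have h0 := congrFun hc 0
        have h1 := congrFun hc 1
        have h2 := congrFun hc 2
        simp only [Pi.smul_apply, smul_eq_mul, bvec, Matrix.cons_val_zero,
          Matrix.cons_val_one, Matrix.head_cons, Matrix.cons_val_two, Matrix.tail_cons]
          at h0 h1 h2
        have hc0 : c = 0 := (mul_eq_zero.mp h0).resolve_right hD
        rw [hc0, zero_mul] at h1 h2
        have hP : (-2*u.1 - m*u.2)/(4 - l*m) = 0 :=
          (mul_eq_zero.mp h1.symm).resolve_right (inv_ne_zero hα)
        have hQ : (-l*u.1 - 2*u.2)/(4 - l*m) = 0 :=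
          (mul_eq_zero.mp h2.symm).resolve_right (inv_ne_zero hβ)
        rw [hA u, hP, hQ]
        simp
      intro u w h
      exact sub_eq_zero.mp (hker _ (by rw [map_sub, h, sub_self]))
    · -- surjectivity
      intro y
      obtain ⟨x, rfl⟩ := Submodule.Quotient.mk_surjective _ y
      refine ⟨(α*(x 1 - (x 0/(4 - l*m))*(l+2))) • c2 l
        + (β*(x 2 - (x 0/(4 - l*m))*(m+2))) • c3 m, ?_⟩
      rw [map_add, map_smul, map_smul, he2, he3, smul_smul, smul_smul]
      have e1 : α*(x 1 - (x 0/(4 - l*m))*(l+2)) * α⁻¹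
          = x 1 - (x 0/(4 - l*m))*(l+2) := by
        field_simp
      have e2 : β*(x 2 - (x 0/(4 - l*m))*(m+2)) * β⁻¹
          = x 2 - (x 0/(4 - l*m))*(m+2) := by
        field_simp
      rw [e1, e2, ← Submodule.Quotient.mk_smul, ← Submodule.Quotient.mk_smul,
        ← Submodule.Quotient.mk_add]
      apply hmk
      refine ⟨-(x 0/(4 - l*m)), ?_⟩
      funext i
      fin_cases i <;>
        simp [bvec, Pi.single_apply, Fin.ext_iff, smul_eq_mul] <;>
        field_simp [hD, hD'] <;> ring
  · -- intertwining
    intro v x hx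
    have hxE := hx.trans (hE v)
    rw [Submodule.Quotient.eq, Submodule.mem_span_singleton] at hxE
    obtain ⟨c, hc⟩ := hxE
    have hxc : x = ![0, ((-2*v.1 - m*v.2)/(4 - l*m))*α⁻¹,
        ((-l*v.1 - 2*v.2)/(4 - l*m))*β⁻¹] + c • bvec l m := by
      rw [hc]; abel
    subst hxc
    have hb0 : (Submodule.Quotient.mk (bvec l m) :
        (Fin 3 → K) ⧸ Submodule.span K {bvec l m}) = 0 :=
      (Submodule.Quotient.mk_eq_zero _).mpr (Submodule.mem_span_singleton_self _)
    have hs1b : s1 α β (bvec l m) = bvec l m := by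
      rw [s1_apply]; funext i; fin_cases i <;> simp [bvec] <;>
        linear_combination hΔ
    have hs2b : s2 l (bvec l m) = bvec l m := by
      rw [s2_apply]; funext i; fin_cases i <;> simp [bvec] <;> ring
    have hs3b : s3 m (bvec l m) = bvec l m := by
      rw [s3_apply]; funext i; fin_cases i <;> simp [bvec] <;> ring
    refine ⟨?_, ?_, ?_⟩
    · have hs : e (sigma1 α β l m v) = Submodule.Quotient.mk
          ![0, ((-2*(v.1*(4-l*m) - ((l+2)*v.1+(m+2)*v.2)*α)
                - m*(v.2*(4-l*m) - ((l+2)*v.1+(m+2)*v.2)*β))/((4-l*m)*(4-l*m)))*α⁻¹,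
              ((-l*(v.1*(4-l*m) - ((l+2)*v.1+(m+2)*v.2)*α)
                - 2*(v.2*(4-l*m) - ((l+2)*v.1+(m+2)*v.2)*β))/((4-l*m)*(4-l*m)))*β⁻¹] := by
        rw [hE, sigma1_apply]
        congr 1
        funext i
        fin_cases i
        · rfl
        · show _ * α⁻¹ = _ * α⁻¹
          congr 1
          field_simp [hD, hD']
        · show _ * β⁻¹ = _ * β⁻¹
          congr 1
          field_simp [hD, hD']
      rw [map_add, LinearMap.map_smul, hs1b, Submodule.Quotient.mk_add,
        Submodule.Quotient.mk_smul, hb0, smul_zero, add_zero, hs]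
      apply hmk
      refine ⟨((-2*v.1 - m*v.2) + (-l*v.1 - 2*v.2))/((4 - l*m)*(4 - l*m)), ?_⟩
      rw [s1_apply]
      funext i
      fin_cases i <;>
        simp only [Pi.sub_apply, Pi.smul_apply, smul_eq_mul, bvec, Matrix.cons_val_zero,
          Matrix.cons_val_one, Matrix.head_cons, Matrix.cons_val_two, Matrix.tail_cons,
          Fin.zero_eta, Fin.mk_one, Fin.reduceFinMk] <;>
        field_simp [hD, hD']
      · ring
      · linear_combination ((l+2)*v.1+(m+2)*v.2) * hdr
      · linear_combination (-((l+2)*v.1+(m+2)*v.2)) * hdr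
    · rw [map_add, LinearMap.map_smul, hs2b, Submodule.Quotient.mk_add,
        Submodule.Quotient.mk_smul, hb0, smul_zero, add_zero, hE]
      apply hmk
      refine ⟨0, ?_⟩
      rw [sigma2_apply, s2_apply]
      funext i
      fin_cases i <;>
        simp only [Pi.sub_apply, Pi.smul_apply, smul_eq_mul, bvec, Matrix.cons_val_zero,
          Matrix.cons_val_one, Matrix.head_cons, Matrix.cons_val_two, Matrix.tail_cons,
          Fin.zero_eta, Fin.mk_one, Fin.reduceFinMk] <;>
        field_simp [hD, hD']
      · ring
      · linear_combination (-(l*v.1+2*v.2)) * hdr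
      · ring
    · rw [map_add, LinearMap.map_smul, hs3b, Submodule.Quotient.mk_add,
        Submodule.Quotient.mk_smul, hb0, smul_zero, add_zero, hE]
      apply hmk
      refine ⟨0, ?_⟩
      rw [sigma3_apply, s3_apply]
      funext i
      fin_cases i <;>
        simp only [Pi.sub_apply, Pi.smul_apply, smul_eq_mul, bvec, Matrix.cons_val_zero,
          Matrix.cons_val_one, Matrix.head_cons, Matrix.cons_val_two, Matrix.tail_cons,
          Fin.zero_eta, Fin.mk_one, Fin.reduceFinMk] <;>
        field_simp [hD, hD']
      · ring
      · ring
      · linear_combination (2*v.1+m*v.2) * hdr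
end
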